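/- Let p be a prime, q = p^e with e ≥ 1, F a field of characteristic p, and c ∈ F. Suppose the polynomial X^q + X − c splits over F, and let R ⊆ F be its set of roots (necessarily q distinct roots, since the derivative of X^q + X − c is 1). Then the power sums S_r = Σ_{u∈R} u^r satisfy: S_r = 0 for all r with 1 ≤ r ≤ q−2; S_{q−1} = 1; S_r = 0 for all r with q ≤ r ≤ 2q−3; and S_{2(q−1)} = −1. -/

import Mathlib

open Polynomial Finset

/-- Sum of `j`-th powers over the full set of `n`-th roots of unity vanishes
when `0 < j < n`. -/
lemma aux_sum_pow_nthRoots {F : Type*} [Field F] [DecidableEq F] {n j : ℕ}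
    (hcard : (nthRootsFinset n (1 : F)).card = n) (hj0 : 0 < j) (hjn : j < n) :
    ∑ x ∈ nthRootsFinset n (1 : F), x ^ j = 0 := by
  have hn0 : 0 < n := hj0.trans hjn
  -- find a ∈ E with a^j ≠ 1
  obtain ⟨a, ha, haj⟩ : ∃ a ∈ nthRootsFinset n (1 : F), a ^ j ≠ 1 := by
    by_contra h
    push_neg at h
    have hsub : nthRootsFinset n (1 : F) ⊆ (nthRoots j (1 : F)).toFinset := by
      intro x hx
      rw [Multiset.mem_toFinset, mem_nthRoots hj0]
      exact h x hx
    have := (Finset.card_le_card hsub).trans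
      ((Multiset.toFinset_card_le _).trans (card_nthRoots j (1 : F)))
    omega
  have ha0 : a ≠ 0 := ne_zero_of_mem_nthRootsFinset one_ne_zero ha
  have himg : (nthRootsFinset n (1 : F)).image (a * ·) = nthRootsFinset n (1 : F) := by
    apply Finset.eq_of_subset_of_card_le
    · intro x hx
      simp only [Finset.mem_image] at hx
      obtain ⟨y, hy, rfl⟩ := hx
      simpa using mul_mem_nthRootsFinset ha hy
    · rw [Finset.card_image_of_injective _ (mul_right_injective₀ ha0)]
  have key : ∑ x ∈ nthRootsFinset n (1 : F), x ^ j
      = a ^ j * ∑ x ∈ nthRootsFinset n (1 : F), x ^ j := by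
    conv_lhs => rw [← himg]
    rw [Finset.sum_image (fun x _ y _ h => mul_right_injective₀ ha0 h),
      Finset.mul_sum]
    simp [mul_pow]
  have : (a ^ j - 1) * ∑ x ∈ nthRootsFinset n (1 : F), x ^ j = 0 := by
    rw [sub_mul, one_mul, ← key, sub_self]
  rcases mul_eq_zero.mp this with h | h
  · exact absurd (sub_eq_zero.mp h) haj
  · exact h

/-- power sums of the roots of `X^q + X − c` over a field of
characteristic `p`, where `q = p^e`: `S_r = 0` for `1 ≤ r ≤ q−2` and for
`q ≤ r ≤ 2q−3`, while `S_{q−1} = 1` and `S_{2(q−1)} = −1`. -/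
theorem power_sums_of_artin_schreier_roots
    (p e q : ℕ) (hp : p.Prime) (he : 1 ≤ e) (hq : q = p ^ e)
    (F : Type*) [Field F] [DecidableEq F] [CharP F p] (c : F)
    (hsplit : Polynomial.Splits
      (Polynomial.X ^ q + Polynomial.X - Polynomial.C c)) :
    let R := (Polynomial.X ^ q + Polynomial.X - Polynomial.C c : Polynomial F).roots.toFinset
    (∀ r : ℕ, 1 ≤ r → r ≤ q - 2 → ∑ u ∈ R, u ^ r = 0) ∧
    (∑ u ∈ R, u ^ (q - 1) = 1) ∧
    (∀ r : ℕ, q ≤ r → r ≤ 2 * q - 3 → ∑ u ∈ R, u ^ r = 0) ∧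
    (∑ u ∈ R, u ^ (2 * (q - 1)) = -1) := by
  intro R
  set f : F[X] := X ^ q + X - C c with hf
  have hq2 : 2 ≤ q := by
    rw [hq]
    calc 2 ≤ p := hp.two_le
    _ = p ^ 1 := (pow_one p).symm
    _ ≤ p ^ e := Nat.pow_le_pow_right hp.pos he
  have hqF : (q : F) = 0 := by
    rw [hq]
    push_cast
    rw [CharP.cast_eq_zero F p, zero_pow (by omega)]
  -- degree facts
  have hfe : f = X ^ q + (X - C c) := by ring
  have hdeglt : (X - C c : F[X]).degree < (X ^ q : F[X]).degree := by
    rw [degree_X_sub_C, degree_X_pow]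
    exact_mod_cast by omega
  have hmonic : f.Monic := by
    rw [hfe]; exact (monic_X_pow q).add_of_left hdeglt
  have hdeg : f.degree = q := by
    rw [hfe, degree_add_eq_left_of_degree_lt hdeglt, degree_X_pow]
  have hndeg : f.natDegree = q := natDegree_eq_of_degree_eq_some hdeg
  have hfne : f ≠ 0 := hmonic.ne_zero
  -- separability, distinct roots
  have hder : f.derivative = 1 := by
    rw [hf]
    simp [derivative_X_pow, hqF]
  have hsep : f.Separable := by
    rw [Polynomial.separable_def, hder]
    exact isCoprime_one_right
  have hnodup : f.roots.Nodup := Polynomial.nodup_roots hsep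
  have hcardroots : Multiset.card f.roots = q := by
    rw [splits_iff_card_roots.mp hsplit, hndeg]
  have hRcard : R.card = q := by
    rw [show R = f.roots.toFinset from rfl, Multiset.toFinset_card_of_nodup hnodup,
      hcardroots]
  have hmemR : ∀ u, u ∈ R ↔ u ^ q + u = c := by
    intro u
    rw [show R = f.roots.toFinset from rfl, Multiset.mem_toFinset, mem_roots hfne,
      IsRoot.def, hf]
    simp only [eval_sub, eval_add, eval_pow, eval_X, eval_C]
    constructor <;> intro h <;> linear_combination h
  -- pick a root t
  obtain ⟨t, ht⟩ : R.Nonempty := Finset.card_pos.mp (by omega)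
  have htc : t ^ q + t = c := (hmemR t).mp ht
  -- D = R - t
  set D : Finset F := R.image (· - t) with hD
  have hsubinj : Function.Injective (· - t : F → F) := fun x y h => by
    simpa using congrArg (· + t) h
  have hDcard : D.card = q := by rw [hD, Finset.card_image_of_injective _ hsubinj, hRcard]
  have hDmem : ∀ d ∈ D, d ^ q + d = 0 := by
    intro d hd
    rw [hD, Finset.mem_image] at hd
    obtain ⟨u, hu, rfl⟩ := hd
    have huc := (hmemR u).mp hu
    haveI := Fact.mk hp
    have : (u - t) ^ q = u ^ q - t ^ q := by
      rw [hq]; exact sub_pow_char_pow u t e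
    rw [this]
    linear_combination huc - htc
  have h0D : (0 : F) ∈ D := by
    rw [hD, Finset.mem_image]; exact ⟨t, ht, sub_self t⟩
  -- nonzero elements of D satisfy d^(q-1) = -1
  have hDpow : ∀ d ∈ D, d ≠ 0 → d ^ (q - 1) = -1 := by
    intro d hd hd0
    have h := hDmem d hd
    have hqsplit : d ^ q = d ^ (q - 1) * d := by
      rw [← pow_succ]
      congr 1
      omega
    have : d * (d ^ (q - 1) + 1) = 0 := by
      rw [mul_add, mul_one, mul_comm, ← hqsplit]; exact h
    rcases mul_eq_zero.mp this with h' | h'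
    · exact absurd h' hd0
    · linear_combination h'
  -- pick a nonzero element h₀ of D
  have hDe_card : (D.erase 0).card = q - 1 := by
    rw [Finset.card_erase_of_mem h0D, hDcard]
  obtain ⟨h₀, hh₀⟩ : (D.erase 0).Nonempty := Finset.card_pos.mp (by omega)
  have hh₀0 : h₀ ≠ 0 := Finset.ne_of_mem_erase hh₀
  have hh₀D : h₀ ∈ D := Finset.mem_of_mem_erase hh₀
  have hh₀pow : h₀ ^ (q - 1) = -1 := hDpow h₀ hh₀D hh₀0
  -- the image of D \ {0} under division by h₀ is the full set of (q-1)-th roots of 1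
  set I : Finset F := (D.erase 0).image (· / h₀) with hI
  have hdivinj : Function.Injective (· / h₀ : F → F) := fun x y h => by
    field_simp at h; exact h
  have hIcard : I.card = q - 1 := by
    rw [hI, Finset.card_image_of_injective _ hdivinj, hDe_card]
  have hIsub : I ⊆ nthRootsFinset (q - 1) (1 : F) := by
    intro x hx
    rw [hI, Finset.mem_image] at hx
    obtain ⟨d, hd, rfl⟩ := hx
    rw [mem_nthRootsFinset (by omega) (1 : F)]
    rw [div_pow, hDpow d (Finset.mem_of_mem_erase hd) (Finset.ne_of_mem_erase hd),
      hh₀pow]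
    simp
  have hIeq : I = nthRootsFinset (q - 1) (1 : F) := by
    apply Finset.eq_of_subset_of_card_le hIsub
    calc (nthRootsFinset (q - 1) (1 : F)).card ≤ Multiset.card (nthRoots (q - 1) (1 : F)) := by
          rw [nthRootsFinset_def]; exact Multiset.toFinset_card_le _
      _ ≤ q - 1 := card_nthRoots _ _
      _ = I.card := hIcard.symm
  have hEcard : (nthRootsFinset (q - 1) (1 : F)).card = q - 1 := by rw [← hIeq, hIcard]
  -- power sums over D
  have hDsum0 : ∀ j : ℕ, j ≤ q - 2 → ∑ d ∈ D, d ^ j = 0 := by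
    intro j hj
    rcases Nat.eq_zero_or_pos j with rfl | hj0
    · simp only [pow_zero, Finset.sum_const, nsmul_eq_mul, mul_one, hDcard, hqF]
    · -- split off 0
      rw [← Finset.insert_erase h0D, Finset.sum_insert (Finset.notMem_erase _ _),
        zero_pow (by omega), zero_add]
      have : ∑ d ∈ D.erase 0, d ^ j = ∑ x ∈ I, (h₀ * x) ^ j := by
        rw [hI, Finset.sum_image (fun x _ y _ h => hdivinj h)]
        apply Finset.sum_congr rfl
        intro d hd
        rw [mul_div_cancel₀ _ hh₀0]
      rw [this]
      simp only [mul_pow, ← Finset.mul_sum]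
      rw [hIeq, aux_sum_pow_nthRoots hEcard hj0 (by omega), mul_zero]
  have hDsumq1 : ∑ d ∈ D, d ^ (q - 1) = 1 := by
    rw [← Finset.insert_erase h0D, Finset.sum_insert (Finset.notMem_erase _ _),
      zero_pow (by omega), zero_add]
    have : ∑ d ∈ D.erase 0, d ^ (q - 1) = ∑ _d ∈ D.erase 0, (-1 : F) :=
      Finset.sum_congr rfl fun d hd =>
        hDpow d (Finset.mem_of_mem_erase hd) (Finset.ne_of_mem_erase hd)
    rw [this, Finset.sum_const, hDe_card, nsmul_eq_mul]
    have hcast : ((q - 1 : ℕ) : F) = -1 := by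
      rw [Nat.cast_sub (by omega : 1 ≤ q), Nat.cast_one, hqF]; ring
    rw [hcast]; ring
  -- transfer to R via binomial expansion
  have hRD : ∀ r : ℕ, ∑ u ∈ R, u ^ r
      = ∑ k ∈ Finset.range (r + 1), (∑ d ∈ D, d ^ k) * (t ^ (r - k) * (r.choose k : F)) := by
    intro r
    have h1 : ∑ u ∈ R, u ^ r = ∑ d ∈ D, (d + t) ^ r := by
      rw [hD, Finset.sum_image (fun x _ y _ h => hsubinj h)]
      apply Finset.sum_congr rfl
      intro u _
      rw [sub_add_cancel]
    rw [h1]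
    have h2 : ∀ d : F, (d + t) ^ r
        = ∑ k ∈ Finset.range (r + 1), d ^ k * t ^ (r - k) * (r.choose k : F) :=
      fun d => Commute.add_pow (Commute.all d t) r
    simp_rw [h2]
    rw [Finset.sum_comm]
    apply Finset.sum_congr rfl
    intro k _
    rw [Finset.sum_mul]
    exact Finset.sum_congr rfl fun d _ => by ring
  -- main helper: S_r = 0 for r ≤ q - 2 (including r = 0)
  have hS0 : ∀ r : ℕ, r ≤ q - 2 → ∑ u ∈ R, u ^ r = 0 := by
    intro r hr
    rw [hRD r]
    apply Finset.sum_eq_zero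
    intro k hk
    rw [Finset.mem_range] at hk
    rw [hDsum0 k (by omega), zero_mul]
  -- S_{q-1} = 1
  have hSq1 : ∑ u ∈ R, u ^ (q - 1) = 1 := by
    rw [hRD (q - 1)]
    rw [Finset.sum_eq_single (q - 1)]
    · rw [hDsumq1, Nat.sub_self, pow_zero, Nat.choose_self, Nat.cast_one]; ring
    · intro k hk hk'
      rw [Finset.mem_range] at hk
      rw [hDsum0 k (by omega), zero_mul]
    · intro h
      exact absurd (Finset.mem_range.mpr (by omega)) h
  -- recursion: S_r = c * S_{r-q} - S_{r-q+1} for r ≥ q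
  have hrec : ∀ r : ℕ, q ≤ r →
      ∑ u ∈ R, u ^ r = c * (∑ u ∈ R, u ^ (r - q)) - ∑ u ∈ R, u ^ (r - q + 1) := by
    intro r hr
    rw [Finset.mul_sum, ← Finset.sum_sub_distrib]
    apply Finset.sum_congr rfl
    intro u hu
    have huq : u ^ q = c - u := by linear_combination (hmemR u).mp hu
    have : u ^ r = u ^ (r - q) * u ^ q := by
      rw [← pow_add]
      congr 1
      omega
    rw [this, huq, pow_succ]
    ring
  refine ⟨fun r h1 h2 => hS0 r h2, hSq1, ?_, ?_⟩
  · intro r hr1 hr2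
    rw [hrec r hr1, hS0 (r - q) (by omega), hS0 (r - q + 1) (by omega)]
    ring
  · rw [hrec (2 * (q - 1)) (by omega), show 2 * (q - 1) - q = q - 2 by omega,
      hS0 (q - 2) le_rfl, show q - 2 + 1 = q - 1 by omega, hSq1]
    ring
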